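/- Let n be a positive integer, β > 0, t > 0, and x ∈ ℝ with x ≠ 0. Then ∫_t^∞ r^{n−1} (r−t)^{−3/2} · exp( −r x²/(2t(r−t)) − β r ) dr ≤ (√(2β)/|x|) · ∫_t^∞ r^{n−1} (r−t)^{−1/2} · exp( −r x²/(2t(r−t)) − β r ) dr, both integrals being finite. -/

import Mathlib

open MeasureTheory Set Real
set_option maxHeartbeats 1000000


private lemma add_image (t : ℝ) : (fun s : ℝ => s + t) '' Set.Ioi 0 = Set.Ioi t := by
  ext y
  constructor
  · rintro ⟨x, hx, rfl⟩; simp only [mem_Ioi] at hx ⊢; linarith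
  · intro hy; simp only [mem_Ioi] at hy; exact ⟨y - t, by simp [mem_Ioi]; linarith, by ring⟩

private lemma add_deriv (t : ℝ) : ∀ x ∈ Set.Ioi (0:ℝ),
    HasDerivWithinAt (fun s : ℝ => s + t) ((fun _ : ℝ => (1:ℝ)) x) (Set.Ioi 0) x :=
  fun x _ => ((hasDerivAt_id x).add_const t).hasDerivWithinAt

private lemma add_inj (t : ℝ) : InjOn (fun s : ℝ => s + t) (Set.Ioi 0) :=
  fun a _ b _ h => by simpa using h

private lemma translate_integrableOn {f : ℝ → ℝ} {t : ℝ} :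
    IntegrableOn f (Set.Ioi t) ↔ IntegrableOn (fun s => f (s + t)) (Set.Ioi 0) := by
  have h := integrableOn_image_iff_integrableOn_abs_deriv_smul (measurableSet_Ioi (a := (0:ℝ)))
    (add_deriv t) (add_inj t) f
  simpa [add_image t] using h

private lemma translate_integral (f : ℝ → ℝ) (t : ℝ) :
    ∫ r in Set.Ioi t, f r = ∫ s in Set.Ioi (0:ℝ), f (s + t) := by
  have h := integral_image_eq_integral_abs_deriv_smul (measurableSet_Ioi (a := (0:ℝ)))
    (add_deriv t) (add_inj t) f
  simpa [add_image t] using h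

private lemma inv_image {c : ℝ} (hc : 0 < c) : (fun s : ℝ => c / s) '' Set.Ioi 0 = Set.Ioi 0 := by
  ext y
  constructor
  · rintro ⟨x, hx, rfl⟩; exact div_pos hc hx
  · intro hy; exact ⟨c / y, div_pos hc hy, by field_simp⟩

private lemma my_inv_injOn {c : ℝ} (hc : 0 < c) : InjOn (fun s : ℝ => c / s) (Set.Ioi 0) := by
  intro a ha b hb h
  simp only [mem_Ioi] at ha hb
  field_simp at h
  exact h.symm

private lemma inv_deriv {c : ℝ} : ∀ x ∈ Set.Ioi (0:ℝ),
    HasDerivWithinAt (fun s : ℝ => c / s) ((fun s : ℝ => -(c / s ^ 2)) x) (Set.Ioi 0) x := by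
  intro x hx
  simp only [mem_Ioi] at hx
  have h := (hasDerivAt_inv (ne_of_gt hx)).const_mul c
  simp only [div_eq_mul_inv]
  exact h.hasDerivWithinAt.congr_deriv (by ring)

private lemma inv_subst_integral {c : ℝ} (hc : 0 < c) (g : ℝ → ℝ) :
    ∫ s in Set.Ioi (0:ℝ), g s = ∫ s in Set.Ioi (0:ℝ), (c / s ^ 2) * g (c / s) := by
  have h := integral_image_eq_integral_abs_deriv_smul (measurableSet_Ioi (a := (0:ℝ)))
    (inv_deriv (c := c)) (my_inv_injOn hc) g
  rw [inv_image hc] at h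
  rw [h]
  refine setIntegral_congr_fun measurableSet_Ioi (fun s hs => ?_)
  simp only [mem_Ioi] at hs
  rw [abs_neg, abs_of_pos (div_pos hc (by positivity)), smul_eq_mul]

private lemma inv_subst_integrableOn {c : ℝ} (hc : 0 < c) (g : ℝ → ℝ)
    (hg : IntegrableOn g (Set.Ioi 0)) :
    IntegrableOn (fun s => (c / s ^ 2) * g (c / s)) (Set.Ioi 0) := by
  have h := (integrableOn_image_iff_integrableOn_abs_deriv_smul (measurableSet_Ioi (a := (0:ℝ)))
    (inv_deriv (c := c)) (my_inv_injOn hc) g)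
  rw [inv_image hc] at h
  refine IntegrableOn.congr_fun (h.mp hg) (fun s hs => ?_) measurableSet_Ioi
  simp only [mem_Ioi] at hs
  rw [abs_neg, abs_of_pos (div_pos hc (by positivity)), smul_eq_mul]


private lemma rpow_exp_integrable {e b : ℝ} (he : 0 ≤ e) (hb : 0 < b) :
    IntegrableOn (fun s : ℝ => s ^ e * Real.exp (-b * s)) (Set.Ioi 0) := by
  have h := integrableOn_rpow_mul_exp_neg_mul_rpow (s := e) (p := 1) (by linarith) one_pos hb
  refine h.congr_fun (fun s _ => by beta_reduce; rw [Real.rpow_one]) measurableSet_Ioi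

private lemma psi_integrable (m : ℕ) {β t x : ℝ} (hβ : 0 < β) (ht : 0 < t) (hx : x ≠ 0)
    (p : ℝ) (hp : p = -(1:ℝ)/2 ∨ p = -(3:ℝ)/2) :
    IntegrableOn (fun s : ℝ => (s+t)^m * s ^ p *
      Real.exp (-((s+t) * x ^ 2) / (2 * t * s) - β * (s+t))) (Set.Ioi 0) := by
  have ha : 0 < x^2/2 := by positivity
  set a : ℝ := x^2/2 with ha'
  set C : ℝ := Real.exp (-x^2/(2*t) - β*t) * ((1+t)^m * 2^m) * (6/a^3 + 1/a) with hC'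
  have hC : 0 < C := by positivity
  have h1 := (rpow_exp_integrable (e := (1:ℝ)/2) (by norm_num) hβ).const_mul C
  have h2 := (rpow_exp_integrable (e := (3:ℝ)/2) (by norm_num) hβ).const_mul C
  have h3 := (rpow_exp_integrable (e := (m:ℝ)+(1:ℝ)/2) (by positivity) hβ).const_mul C
  have h4 := (rpow_exp_integrable (e := (m:ℝ)+(3:ℝ)/2) (by positivity) hβ).const_mul C
  have hg : IntegrableOn (fun s : ℝ =>
      C * (s ^ ((1:ℝ)/2) * Real.exp (-β*s)) + C * (s ^ ((3:ℝ)/2) * Real.exp (-β*s)) +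
      (C * (s ^ ((m:ℝ)+(1:ℝ)/2) * Real.exp (-β*s)) + C * (s ^ ((m:ℝ)+(3:ℝ)/2) * Real.exp (-β*s))))
      (Set.Ioi 0) := (h1.add h2).add (h3.add h4)
  refine hg.mono' ?_ ?_
  · apply Measurable.aestronglyMeasurable
    fun_prop
  · refine (ae_restrict_iff' measurableSet_Ioi).2 (ae_of_all _ fun s hs => ?_)
    simp only [mem_Ioi] at hs
    have hσ : 0 < Real.sqrt s := Real.sqrt_pos.2 hs
    have hσ2 : Real.sqrt s * Real.sqrt s = s := Real.mul_self_sqrt hs.le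
    have hψ0 : 0 ≤ (s+t)^m * s ^ p *
        Real.exp (-((s+t) * x ^ 2) / (2 * t * s) - β * (s+t)) :=
      mul_nonneg (mul_nonneg (pow_nonneg (by linarith) m) (Real.rpow_nonneg hs.le p))
        (Real.exp_pos _).le
    rw [Real.norm_eq_abs, abs_of_nonneg hψ0]
    have hexp : Real.exp (-((s+t) * x ^ 2) / (2 * t * s) - β * (s+t))
        = Real.exp (-x^2/(2*t) - β*t) * Real.exp (-(a/s)) * Real.exp (-β*s) := by
      rw [← Real.exp_add, ← Real.exp_add]
      congr 1
      rw [ha']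
      field_simp
      ring
    have h12 : s ^ ((1:ℝ)/2) = Real.sqrt s := (Real.sqrt_eq_rpow s).symm
    have h32 : s ^ ((3:ℝ)/2) = s * Real.sqrt s := by
      rw [show (3:ℝ)/2 = 1 + 1/2 by norm_num, Real.rpow_add hs, Real.rpow_one,
        ← Real.sqrt_eq_rpow]
    have hsp : s ^ p * Real.exp (-(a/s)) ≤ (6/a^3 + 1/a) * (s ^ ((1:ℝ)/2) + s ^ ((3:ℝ)/2)) := by
      have hie : ∀ y : ℝ, 0 < y → Real.exp (-y) ≤ y⁻¹ := fun y hy => by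
        rw [Real.exp_neg]
        exact inv_anti₀ hy (by nlinarith [Real.add_one_le_exp y])
      have hie3 : Real.exp (-(a/s)) ≤ 6 * (s/a)^3 := by
        rw [Real.exp_neg]
        have hp3 := Real.pow_div_factorial_le_exp (x := a/s) (by positivity) 3
        have h6 : ((Nat.factorial 3 : ℕ) : ℝ) = 6 := by norm_num [Nat.factorial]
        rw [h6] at hp3
        have hd : 0 < (a/s)^3 / 6 := by positivity
        calc (Real.exp (a/s))⁻¹ ≤ ((a/s)^3/6)⁻¹ := inv_anti₀ hd hp3
          _ = 6 * (s/a)^3 := by field_simp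
      rcases hp with rfl | rfl
      · have hs1 : s ^ (-(1:ℝ)/2) = (Real.sqrt s)⁻¹ := by
          rw [show -(1:ℝ)/2 = -(1/2) by norm_num, Real.rpow_neg hs.le, ← Real.sqrt_eq_rpow]
        have hle : Real.exp (-(a/s)) ≤ s/a := by
          have := hie (a/s) (by positivity)
          rwa [inv_div] at this
        calc s ^ (-(1:ℝ)/2) * Real.exp (-(a/s)) ≤ (Real.sqrt s)⁻¹ * (s/a) := by
              rw [hs1]; exact mul_le_mul_of_nonneg_left hle (by positivity)
          _ = (1/a) * Real.sqrt s := by field_simp; rw [Real.sq_sqrt hs.le]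
          _ ≤ (6/a^3 + 1/a) * (s ^ ((1:ℝ)/2) + s ^ ((3:ℝ)/2)) := by
              rw [h12, h32]
              have e1 : 0 ≤ 6/a^3 * (Real.sqrt s + s * Real.sqrt s) := by positivity
              have e2 : 0 ≤ 1/a * (s * Real.sqrt s) := by positivity
              nlinarith [e1, e2]
      · have hs3 : s ^ (-(3:ℝ)/2) = (s * Real.sqrt s)⁻¹ := by
          rw [show -(3:ℝ)/2 = -(3/2) by norm_num, Real.rpow_neg hs.le,
            show (3:ℝ)/2 = 1 + 1/2 by norm_num, Real.rpow_add hs, Real.rpow_one,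
            ← Real.sqrt_eq_rpow]
        calc s ^ (-(3:ℝ)/2) * Real.exp (-(a/s)) ≤ (s * Real.sqrt s)⁻¹ * (6 * (s/a)^3) := by
              rw [hs3]; exact mul_le_mul_of_nonneg_left hie3 (by positivity)
          _ = (6/a^3) * (s * Real.sqrt s) := by
              field_simp
              linear_combination (-1) * hσ2
          _ ≤ (6/a^3 + 1/a) * (s ^ ((1:ℝ)/2) + s ^ ((3:ℝ)/2)) := by
              rw [h12, h32]
              have e1 : 0 ≤ 6/a^3 * Real.sqrt s := by positivity
              have e2 : 0 ≤ 1/a * (Real.sqrt s + s * Real.sqrt s) := by positivity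
              nlinarith [e1, e2]
    have hpow : (s+t)^m ≤ (1+t)^m * (2^m * (1 + s^m)) := by
      have h1 : s + t ≤ (1+t)*(1+s) := by nlinarith
      have h2 : (s+t)^m ≤ ((1+t)*(1+s))^m := pow_le_pow_left₀ (by linarith) h1 m
      rw [mul_pow] at h2
      have h3 : (1+s)^m ≤ 2^m * (1 + s^m) := by
        rcases le_total s 1 with h | h
        · have hb2 : (1+s)^m ≤ 2^m := pow_le_pow_left₀ (by linarith) (by linarith) m
          have h2m : (0:ℝ) < 2^m := pow_pos (by norm_num) m
          have : (2:ℝ)^m ≤ 2^m * (1 + s^m) :=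
            le_mul_of_one_le_right h2m.le (by nlinarith [pow_nonneg hs.le m])
          linarith
        · have hb2 : (1+s)^m ≤ (2*s)^m := pow_le_pow_left₀ (by linarith) (by linarith) m
          rw [mul_pow] at hb2
          have : (2:ℝ)^m * s^m ≤ 2^m * (1 + s^m) :=
            mul_le_mul_of_nonneg_left (by linarith [pow_nonneg hs.le m]) (pow_pos (show (0:ℝ)<2 by norm_num) m).le
          linarith
      calc (s+t)^m ≤ (1+t)^m * (1+s)^m := h2
        _ ≤ (1+t)^m * (2^m * (1 + s^m)) :=
            mul_le_mul_of_nonneg_left h3 (pow_nonneg (by linarith) m)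
    have hsm1 : s^m * s ^ ((1:ℝ)/2) = s ^ ((m:ℝ)+(1:ℝ)/2) := by
      rw [← Real.rpow_natCast s m, ← Real.rpow_add hs]
    have hsm3 : s^m * s ^ ((3:ℝ)/2) = s ^ ((m:ℝ)+(3:ℝ)/2) := by
      rw [← Real.rpow_natCast s m, ← Real.rpow_add hs]
    have main : (s+t)^m * (s ^ p * Real.exp (-(a/s))) ≤
        ((1+t)^m * (2^m * (1 + s^m))) *
          ((6/a^3 + 1/a) * (s ^ ((1:ℝ)/2) + s ^ ((3:ℝ)/2))) := by
      refine mul_le_mul hpow hsp ?_ ?_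
      · exact mul_nonneg (Real.rpow_nonneg hs.le p) (Real.exp_pos _).le
      · positivity
    calc (s+t)^m * s ^ p * Real.exp (-((s+t) * x ^ 2) / (2 * t * s) - β * (s+t))
        = (s+t)^m * (s ^ p * Real.exp (-(a/s))) * (Real.exp (-x^2/(2*t) - β*t) * Real.exp (-β*s)) := by
          rw [hexp]; ring
      _ ≤ ((1+t)^m * (2^m * (1 + s^m))) *
          ((6/a^3 + 1/a) * (s ^ ((1:ℝ)/2) + s ^ ((3:ℝ)/2))) *
          (Real.exp (-x^2/(2*t) - β*t) * Real.exp (-β*s)) := by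
          exact mul_le_mul_of_nonneg_right main (by positivity)
      _ = C * (s ^ ((1:ℝ)/2) * Real.exp (-β*s)) + C * (s ^ ((3:ℝ)/2) * Real.exp (-β*s)) +
          (C * (s ^ ((m:ℝ)+(1:ℝ)/2) * Real.exp (-β*s)) + C * (s ^ ((m:ℝ)+(3:ℝ)/2) * Real.exp (-β*s))) := by
          rw [hC', ← hsm1, ← hsm3]; ring


private lemma key_pointwise (m : ℕ) {β t x : ℝ} (hβ : 0 < β) (ht : 0 < t) (hx : x ≠ 0)
    {s : ℝ} (hs : 0 < s) :
    0 ≤ (Real.sqrt (2*β)/|x| * ((s+t)^m * s ^ (-(1:ℝ)/2) *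
            Real.exp (-((s+t)*x^2)/(2*t*s) - β*(s+t)))
          - (s+t)^m * s ^ (-(3:ℝ)/2) * Real.exp (-((s+t)*x^2)/(2*t*s) - β*(s+t)))
       + (x^2/(2*β)/s^2) *
         (Real.sqrt (2*β)/|x| * ((x^2/(2*β)/s+t)^m * (x^2/(2*β)/s) ^ (-(1:ℝ)/2) *
            Real.exp (-((x^2/(2*β)/s+t)*x^2)/(2*t*(x^2/(2*β)/s)) - β*(x^2/(2*β)/s+t)))
          - (x^2/(2*β)/s+t)^m * (x^2/(2*β)/s) ^ (-(3:ℝ)/2) *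
            Real.exp (-((x^2/(2*β)/s+t)*x^2)/(2*t*(x^2/(2*β)/s)) - β*(x^2/(2*β)/s+t))) := by
  have hx2 : 0 < x^2 := by positivity
  have h2β : 0 < 2*β := by linarith
  set c : ℝ := x^2/(2*β) with hc'
  have hc : 0 < c := by positivity
  set K : ℝ := Real.sqrt (2*β)/|x| with hK'
  have hK0 : 0 < K := div_pos (Real.sqrt_pos.2 h2β) (abs_pos.2 hx)
  set γ : ℝ := Real.sqrt c with hγ'
  set σ : ℝ := Real.sqrt s with hσ'
  have hγ : 0 < γ := Real.sqrt_pos.2 hc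
  have hσ : 0 < σ := Real.sqrt_pos.2 hs
  have hγ2 : γ * γ = c := Real.mul_self_sqrt hc.le
  have hσ2 : σ * σ = s := Real.mul_self_sqrt hs.le
  have hKγ : K * γ = 1 := by
    have hγeq : γ = |x| / Real.sqrt (2*β) := by
      rw [hγ', hc', Real.sqrt_div (sq_nonneg x), Real.sqrt_sq_eq_abs]
    rw [hK', hγeq]
    field_simp
  have hcs : 0 < c/s := div_pos hc hs
  have hw : Real.exp (-((c/s+t)*x^2)/(2*t*(c/s)) - β*(c/s+t))
      = Real.exp (-((s+t)*x^2)/(2*t*s) - β*(s+t)) := by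
    congr 1
    rw [hc']
    field_simp
    ring
  set w : ℝ := Real.exp (-((s+t)*x^2)/(2*t*s) - β*(s+t)) with hw'
  have hwpos : 0 < w := Real.exp_pos _
  have hr1 : s ^ (-(1:ℝ)/2) = σ⁻¹ := by
    rw [show -(1:ℝ)/2 = -(1/2) by norm_num, Real.rpow_neg hs.le, ← Real.sqrt_eq_rpow, hσ']
  have hr3 : s ^ (-(3:ℝ)/2) = (s*σ)⁻¹ := by
    rw [show -(3:ℝ)/2 = -(3/2) by norm_num, Real.rpow_neg hs.le,
      show (3:ℝ)/2 = 1 + 1/2 by norm_num, Real.rpow_add hs, Real.rpow_one,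
      ← Real.sqrt_eq_rpow, hσ']
  have hsqcs : Real.sqrt (c/s) = γ/σ := by rw [Real.sqrt_div hc.le, hγ', hσ']
  have hr1' : (c/s) ^ (-(1:ℝ)/2) = (γ/σ)⁻¹ := by
    rw [show -(1:ℝ)/2 = -(1/2) by norm_num, Real.rpow_neg hcs.le, ← Real.sqrt_eq_rpow, hsqcs]
  have hr3' : (c/s) ^ (-(3:ℝ)/2) = (c/s*(γ/σ))⁻¹ := by
    rw [show -(3:ℝ)/2 = -(3/2) by norm_num, Real.rpow_neg hcs.le,
      show (3:ℝ)/2 = 1 + 1/2 by norm_num, Real.rpow_add hcs, Real.rpow_one,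
      ← Real.sqrt_eq_rpow, hsqcs]
  rw [hw, hr1, hr3, hr1', hr3']
  set P : ℝ := (s+t)^m with hP'
  set Q : ℝ := (c/s+t)^m with hQ'
  have hP0 : 0 ≤ P := pow_nonneg (by linarith) m
  have hQ0 : 0 ≤ Q := pow_nonneg (by positivity) m
  have hKe : K = γ⁻¹ := eq_inv_of_mul_eq_one_left (by linarith [hKγ] : K * γ = 1)
  have key_id : (K * (P * σ⁻¹ * w) - P * (s*σ)⁻¹ * w)
      + (c/s^2) * (K * (Q * (γ/σ)⁻¹ * w) - Q * (c/s*(γ/σ))⁻¹ * w)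
      = (P - Q) * ((K*s - 1) * (s*σ)⁻¹) * w := by
    rw [hKe, ← hγ2, ← hσ2]
    field_simp
    ring
  rw [key_id]
  rcases le_total 1 (K*s) with h | h
  · have hsγ : γ ≤ s := by
      nlinarith
    have hQP : Q ≤ P := by
      rw [hP', hQ']
      have : c/s ≤ s := by
        rw [div_le_iff₀ hs]; nlinarith
      exact pow_le_pow_left₀ (by positivity) (by linarith) m
    have : 0 ≤ (P - Q) * ((K*s - 1) * (s*σ)⁻¹) :=
      mul_nonneg (by linarith) (mul_nonneg (by linarith) (by positivity))
    exact mul_nonneg this hwpos.le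
  · have hsγ : s ≤ γ := by nlinarith
    have hQP : P ≤ Q := by
      rw [hP', hQ']
      have : s ≤ c/s := by
        rw [le_div_iff₀ hs]; nlinarith
      exact pow_le_pow_left₀ (by linarith) (by linarith) m
    have h1 : (K*s - 1) * (s*σ)⁻¹ ≤ 0 :=
      mul_nonpos_of_nonpos_of_nonneg (by linarith) (by positivity)
    have : 0 ≤ (P - Q) * ((K*s - 1) * (s*σ)⁻¹) := by nlinarith [h1, hQP]
    exact mul_nonneg this hwpos.le


/-- for the `Γ(n−1/2,β)` prior, the numerator of the conditional pinning
rate is bounded by `√(2β)/|x|` times its denominator (i.e. `|x|·f(t,x) ≤ √(2β)`),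
both integrals being finite. -/
theorem gamma_prior_drift_bound
    (n : ℕ) (hn : 0 < n) (β t x : ℝ) (hβ : 0 < β) (ht : 0 < t) (hx : x ≠ 0) :
    IntegrableOn (fun r : ℝ => r ^ (n - 1) * (r - t) ^ (-(3:ℝ)/2) *
      Real.exp (-(r * x ^ 2) / (2 * t * (r - t)) - β * r)) (Set.Ioi t) ∧
    IntegrableOn (fun r : ℝ => r ^ (n - 1) * (r - t) ^ (-(1:ℝ)/2) *
      Real.exp (-(r * x ^ 2) / (2 * t * (r - t)) - β * r)) (Set.Ioi t) ∧
    (∫ r in Set.Ioi t, r ^ (n - 1) * (r - t) ^ (-(3:ℝ)/2) *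
        Real.exp (-(r * x ^ 2) / (2 * t * (r - t)) - β * r)) ≤
      (Real.sqrt (2 * β) / |x|) *
        (∫ r in Set.Ioi t, r ^ (n - 1) * (r - t) ^ (-(1:ℝ)/2) *
          Real.exp (-(r * x ^ 2) / (2 * t * (r - t)) - β * r)) := by
  have h2β : 0 < 2*β := by linarith
  have hI3 : IntegrableOn (fun s : ℝ => (s+t)^(n-1) * s ^ (-(3:ℝ)/2) *
      Real.exp (-((s+t) * x ^ 2) / (2 * t * s) - β * (s+t))) (Set.Ioi 0) :=
    psi_integrable (n-1) hβ ht hx _ (Or.inr rfl)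
  have hI1 : IntegrableOn (fun s : ℝ => (s+t)^(n-1) * s ^ (-(1:ℝ)/2) *
      Real.exp (-((s+t) * x ^ 2) / (2 * t * s) - β * (s+t))) (Set.Ioi 0) :=
    psi_integrable (n-1) hβ ht hx _ (Or.inl rfl)
  refine ⟨translate_integrableOn.mpr ?_, translate_integrableOn.mpr ?_, ?_⟩
  · simpa only [add_sub_cancel_right] using hI3
  · simpa only [add_sub_cancel_right] using hI1
  rw [translate_integral (fun r : ℝ => r ^ (n - 1) * (r - t) ^ (-(3:ℝ)/2) *
        Real.exp (-(r * x ^ 2) / (2 * t * (r - t)) - β * r)) t,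
      translate_integral (fun r : ℝ => r ^ (n - 1) * (r - t) ^ (-(1:ℝ)/2) *
        Real.exp (-(r * x ^ 2) / (2 * t * (r - t)) - β * r)) t]
  simp only [add_sub_cancel_right]
  set c : ℝ := x^2/(2*β) with hc'
  have hc : 0 < c := by positivity
  set G : ℝ → ℝ := fun u => Real.sqrt (2*β)/|x| * ((u+t)^(n-1) * u ^ (-(1:ℝ)/2) *
      Real.exp (-((u+t)*x^2)/(2*t*u) - β*(u+t)))
    - (u+t)^(n-1) * u ^ (-(3:ℝ)/2) * Real.exp (-((u+t)*x^2)/(2*t*u) - β*(u+t)) with hG'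
  have hG : IntegrableOn G (Set.Ioi 0) := (hI1.const_mul _).sub hI3
  have hH : IntegrableOn (fun s => (c/s^2) * G (c/s)) (Set.Ioi 0) :=
    inv_subst_integrableOn hc G hG
  have hGH : ∫ s in Set.Ioi (0:ℝ), G s = ∫ s in Set.Ioi (0:ℝ), (c/s^2) * G (c/s) :=
    inv_subst_integral hc G
  have hpos : 0 ≤ ∫ s in Set.Ioi (0:ℝ), (G s + (c/s^2) * G (c/s)) := by
    refine setIntegral_nonneg measurableSet_Ioi (fun s hs => ?_)
    have hkey := key_pointwise (n-1) hβ ht hx (mem_Ioi.mp hs)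
    rw [← hc'] at hkey
    simpa only [hG'] using hkey
  have hsplit : ∫ s in Set.Ioi (0:ℝ), (G s + (c/s^2) * G (c/s)) =
      (∫ s in Set.Ioi (0:ℝ), G s) + ∫ s in Set.Ioi (0:ℝ), (c/s^2) * G (c/s) :=
    integral_add hG hH
  have h0 : 0 ≤ ∫ s in Set.Ioi (0:ℝ), G s := by
    rw [hsplit, ← hGH] at hpos; linarith
  have hGint : ∫ s in Set.Ioi (0:ℝ), G s =
      Real.sqrt (2*β)/|x| * (∫ s in Set.Ioi (0:ℝ), (s+t)^(n-1) * s ^ (-(1:ℝ)/2) *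
        Real.exp (-((s+t)*x^2)/(2*t*s) - β*(s+t)))
      - ∫ s in Set.Ioi (0:ℝ), (s+t)^(n-1) * s ^ (-(3:ℝ)/2) *
        Real.exp (-((s+t)*x^2)/(2*t*s) - β*(s+t)) := by
    simp only [hG']
    rw [integral_sub (hI1.const_mul _) hI3, MeasureTheory.integral_const_mul]
  have := hGint ▸ h0
  linarith [this]
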